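/- arXiv:1711.00167 — 3 statements merged into one kernel-verified Lean document; each statement's English description precedes it below -/
import Mathlib

section
/- The cutwidth of a complete binary tree on N = 2^h - 1 nodes is at most h - 1 (and in particular at most log₂ N). -/
/-- The cut of a vertex set `S`: the number of edges of `G` with exactly one endpoint
in `S` (counted as crossing pairs oriented from `S` to its complement). -/
noncomputable def cutOf {V : Type*} (G : SimpleGraph V) (S : Set V) : ℕ :=
  {p : V × V | G.Adj p.1 p.2 ∧ p.1 ∈ S ∧ p.2 ∉ S}.ncard

/-- The cutwidth of a finite graph: the minimum over vertex orderings (crusades,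
i.e. sequences of prefix sets each obtained by adding one vertex) of the maximum
cut of a prefix set. -/
noncomputable def cutwidth {V : Type*} [Fintype V] (G : SimpleGraph V) : ℕ :=
  sInf {w : ℕ | ∃ σ : Fin (Fintype.card V) ≃ V,
    ∀ k : ℕ, cutOf G {v | ∃ j : Fin (Fintype.card V), (j : ℕ) < k ∧ σ j = v} ≤ w}

/-- The complete binary tree on `2^h - 1` nodes, in heap indexing: node `i` has
children `2i+1` and `2i+2`. -/
def btree (h : ℕ) : SimpleGraph (Fin (2^h - 1)) :=
  SimpleGraph.fromRel (fun i j => (j : ℕ) = 2*(i : ℕ) + 1 ∨ (j : ℕ) = 2*(i : ℕ) + 2)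

namespace CWAux

/-- depth of heap node `i` (0-based index, root has depth 0) -/
def dep (i : ℕ) : ℕ := Nat.log2 (i+1)

/-- 1-based in-order rank of heap node `i` in a complete binary tree of height `h` -/
def rk1 (h i : ℕ) : ℕ := 2^(h - 1 - dep i) * (2*(i + 1 - 2^(dep i)) + 1)

lemma dep_lt {h i : ℕ} (hi : i + 1 < 2^h) : dep i < h := by
  rw [dep, Nat.log2_lt (by omega)]; exact hi

lemma two_pow_dep_le (i : ℕ) : 2^(dep i) ≤ i + 1 := Nat.log2_self_le (by omega)

lemma lt_two_pow_dep (i : ℕ) : i + 1 < 2^(dep i + 1) := Nat.lt_log2_self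

lemma dep_left (i : ℕ) : dep (2*i+1) = dep i + 1 := by
  have h1 := two_pow_dep_le i
  have h2 := lt_two_pow_dep i
  rw [pow_succ] at h2
  have ha : dep i + 1 ≤ dep (2*i+1) := by
    exact (Nat.le_log2 (n := 2*i+1+1) (by omega)).mpr (by rw [pow_succ]; omega)
  have hb : dep (2*i+1) < dep i + 2 := by
    refine (Nat.log2_lt (n := 2*i+1+1) (by omega)).mpr ?_
    have he : 2^(dep i + 2) = 2^(dep i) * 2 * 2 := by ring
    omega
  omega

lemma dep_right (i : ℕ) : dep (2*i+2) = dep i + 1 := by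
  have h1 := two_pow_dep_le i
  have h2 := lt_two_pow_dep i
  rw [pow_succ] at h2
  have ha : dep i + 1 ≤ dep (2*i+2) := by
    exact (Nat.le_log2 (n := 2*i+2+1) (by omega)).mpr (by rw [pow_succ]; omega)
  have hb : dep (2*i+2) < dep i + 2 := by
    refine (Nat.log2_lt (n := 2*i+2+1) (by omega)).mpr ?_
    have he : 2^(dep i + 2) = 2^(dep i) * 2 * 2 := by ring
    omega
  omega

lemma rk1_pos (h i : ℕ) : 1 ≤ rk1 h i := by
  have : 1 ≤ 2^(h - 1 - dep i) := Nat.one_le_two_pow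
  have : 2^(h - 1 - dep i) * 1 ≤ 2^(h - 1 - dep i) * (2*(i + 1 - 2^(dep i)) + 1) :=
    Nat.mul_le_mul_left _ (by omega)
  rw [rk1]; omega

lemma rk1_le {h i : ℕ} (hi : i + 1 < 2^h) : rk1 h i ≤ 2^h - 1 := by
  have hd := dep_lt hi
  have h1 := two_pow_dep_le i
  have h2 := lt_two_pow_dep i
  rw [pow_succ] at h2
  have key : rk1 h i ≤ 2^(h-1-dep i) * (2^(dep i)*2 - 1) := by
    rw [rk1]; exact Nat.mul_le_mul_left _ (by omega)
  have e2 : 2^(h-1-dep i) * (2^(dep i)*2 - 1) + 2^(h-1-dep i)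
      = 2^(h-1-dep i) * (2^(dep i)*2) := by
    rw [← Nat.mul_succ]
    congr 1
    have : 1 ≤ 2^(dep i) := Nat.one_le_two_pow
    omega
  have e3 : 2^(h-1-dep i) * (2^(dep i)*2) = 2^h := by
    rw [← mul_assoc, ← pow_add, ← pow_succ]
    congr 1
    omega
  have hp1 : 1 ≤ 2^(h-1-dep i) := Nat.one_le_two_pow
  omega

lemma pow_mul_odd_inj : ∀ a b x y : ℕ, 2^a*(2*x+1) = 2^b*(2*y+1) → a = b ∧ x = y := by
  intro a
  induction a with
  | zero =>
    intro b x y hxy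
    cases b with
    | zero => simp only [pow_zero, one_mul] at hxy; omega
    | succ t =>
      rw [pow_zero, one_mul] at hxy
      obtain ⟨B, hB⟩ : ∃ B, 2^(t+1)*(2*y+1) = 2*B := ⟨2^t*(2*y+1), by ring⟩
      omega
  | succ s ih =>
    intro b x y hxy
    cases b with
    | zero =>
      rw [pow_zero, one_mul] at hxy
      obtain ⟨B, hB⟩ : ∃ B, 2^(s+1)*(2*x+1) = 2*B := ⟨2^s*(2*x+1), by ring⟩
      omega
    | succ t =>
      have h2 : 2*(2^s*(2*x+1)) = 2*(2^t*(2*y+1)) := by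
        calc 2*(2^s*(2*x+1)) = 2^(s+1)*(2*x+1) := by ring
          _ = 2^(t+1)*(2*y+1) := hxy
          _ = 2*(2^t*(2*y+1)) := by ring
      have h3 := Nat.eq_of_mul_eq_mul_left (by norm_num) h2
      have := ih t x y h3
      omega

lemma rk1_inj {h i j : ℕ} (hi : i + 1 < 2^h) (hj : j + 1 < 2^h)
    (he : rk1 h i = rk1 h j) : i = j := by
  have d1 := dep_lt hi
  have d2 := dep_lt hj
  have p1 := two_pow_dep_le i
  have p2 := two_pow_dep_le j
  rw [rk1, rk1] at he
  obtain ⟨hab, hxy⟩ := pow_mul_odd_inj _ _ _ _ he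
  have hdd : dep i = dep j := by omega
  rw [hdd] at p1 hxy
  omega

lemma rk1_left (h i : ℕ) (hc : 2*i + 2 < 2^h) :
    rk1 h i = rk1 h (2*i+1) + 2^(h - 2 - dep i) := by
  have hd : dep (2*i+1) = dep i + 1 := dep_left i
  have hdh : dep i + 2 ≤ h := by
    have := dep_lt (h := h) (i := 2*i+1) (by omega); omega
  have hp := two_pow_dep_le i
  rw [rk1, rk1, hd]
  have e1 : 2*i+1+1 - 2^(dep i + 1) = 2*(i+1-2^(dep i)) := by
    rw [pow_succ]; omega
  rw [e1]
  have e2 : h - 1 - dep i = (h - 2 - dep i) + 1 := by omega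
  have e3 : h - 1 - (dep i + 1) = h - 2 - dep i := by omega
  rw [e2, e3, pow_succ]
  ring

lemma rk1_right (h i : ℕ) (hc : 2*i + 3 < 2^h) :
    rk1 h (2*i+2) = rk1 h i + 2^(h - 2 - dep i) := by
  have hd : dep (2*i+2) = dep i + 1 := dep_right i
  have hdh : dep i + 2 ≤ h := by
    have := dep_lt (h := h) (i := 2*i+2) (by omega); omega
  have hp := two_pow_dep_le i
  rw [rk1, rk1, hd]
  have e1 : 2*i+2+1 - 2^(dep i + 1) = 2*(i+1-2^(dep i)) + 1 := by
    rw [pow_succ]; omega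
  rw [e1]
  have e2 : h - 1 - dep i = (h - 2 - dep i) + 1 := by omega
  have e3 : h - 1 - (dep i + 1) = h - 2 - dep i := by omega
  rw [e2, e3, pow_succ]
  ring

lemma parent_unique {h k p1 p2 : ℕ} (h1 : p1 + 1 < 2^h) (h2 : p2 + 1 < 2^h)
    (hd : dep p2 = dep p1) (hdh : dep p1 + 2 ≤ h)
    (wa1 : rk1 h p1 ≤ k + 2^(h-2-dep p1)) (wb1 : k + 1 ≤ rk1 h p1 + 2^(h-2-dep p1))
    (wa2 : rk1 h p2 ≤ k + 2^(h-2-dep p1)) (wb2 : k + 1 ≤ rk1 h p2 + 2^(h-2-dep p1)) :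
    p1 = p2 := by
  have q1 := two_pow_dep_le p1
  have q2 := two_pow_dep_le p2
  rw [hd] at q2
  rw [rk1] at wa1 wb1
  rw [rk1, hd] at wa2 wb2
  have e2 : h - 1 - dep p1 = (h - 2 - dep p1) + 1 := by omega
  rw [e2, pow_succ] at wa1 wb1 wa2 wb2
  have hEpos : 1 ≤ 2^(h-2-dep p1) := Nat.one_le_two_pow
  set E := 2^(h-2-dep p1) with hE
  set a1 := p1 + 1 - 2^(dep p1) with ha1
  set a2 := p2 + 1 - 2^(dep p1) with ha2
  -- wa1 : E*2*(2*a1+1) ≤ k + E ; wb2 : k+1 ≤ E*2*(2*a2+1) + E ; etc.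
  have key : a1 = a2 := by
    have l1 : E*(4*a1) < E*(4*a2+2) := by nlinarith [wa1, wb2]
    have l2 : E*(4*a2) < E*(4*a1+2) := by nlinarith [wa2, wb1]
    have m1 := Nat.lt_of_mul_lt_mul_left l1
    have m2 := Nat.lt_of_mul_lt_mul_left l2
    omega
  omega

lemma cross_struct {h k : ℕ} {x y : Fin (2^h - 1)}
    (hadj : (btree h).Adj x y) (hx : rk1 h (x : ℕ) ≤ k) (hy : k + 1 ≤ rk1 h (y : ℕ)) :
    ∃ p : ℕ, p + 1 < 2^h ∧ dep p + 2 ≤ h ∧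
      min (dep (x : ℕ)) (dep (y : ℕ)) = dep p ∧
      rk1 h p ≤ k + 2^(h-2-dep p) ∧ k + 1 ≤ rk1 h p + 2^(h-2-dep p) ∧
      (((x : ℕ) = 2*p+1 ∧ (y : ℕ) = p) ∨ ((x : ℕ) = p ∧ (y : ℕ) = 2*p+2)) := by
  have h1 : 1 ≤ 2^h := Nat.one_le_two_pow
  have hxlt : (x : ℕ) + 1 < 2^h := by have := x.isLt; omega
  have hylt : (y : ℕ) + 1 < 2^h := by have := y.isLt; omega
  rw [btree, SimpleGraph.fromRel_adj] at hadj
  obtain ⟨hne, hrel⟩ := hadj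
  rcases hrel with (hr | hr) | (hr | hr)
  · -- y = 2x+1 : left child not in S while parent in S : impossible
    exfalso
    have hrle := rk1_left h (x : ℕ) (by omega)
    rw [← hr] at hrle
    have hEpos : 1 ≤ 2^(h - 2 - dep (x : ℕ)) := Nat.one_le_two_pow
    omega
  · -- y = 2x+2 : right child, p = x
    have hreq := rk1_right h (x : ℕ) (by omega)
    refine ⟨(x : ℕ), hxlt, ?_, ?_, ?_, ?_, Or.inr ⟨rfl, hr⟩⟩
    · have : dep (2*(x:ℕ)+2) < h := dep_lt (by omega)
      rw [dep_right] at this; omega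
    · rw [hr, dep_right]; omega
    · have hEpos : 1 ≤ 2^(h-2-dep (x:ℕ)) := Nat.one_le_two_pow
      omega
    · rw [hr, hreq] at hy
      have hEpos : 1 ≤ 2^(h-2-dep (x:ℕ)) := Nat.one_le_two_pow
      omega
  · -- x = 2y+1 : left child in S, parent out, p = y
    have hrle := rk1_left h (y : ℕ) (by omega)
    refine ⟨(y : ℕ), hylt, ?_, ?_, ?_, ?_, Or.inl ⟨hr, rfl⟩⟩
    · have : dep (2*(y:ℕ)+1) < h := dep_lt (by omega)
      rw [dep_left] at this; omega
    · rw [hr, dep_left]; omega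
    · rw [hr] at hx
      have hEpos : 1 ≤ 2^(h-2-dep (y:ℕ)) := Nat.one_le_two_pow
      omega
    · have hEpos : 1 ≤ 2^(h-2-dep (y:ℕ)) := Nat.one_le_two_pow
      omega
  · -- x = 2y+2 : right child in S while parent out : impossible
    exfalso
    have hreq := rk1_right h (y : ℕ) (by omega)
    rw [← hr] at hreq
    have hEpos : 1 ≤ 2^(h-2-dep (y:ℕ)) := Nat.one_le_two_pow
    omega

lemma cut_bound (h k : ℕ) :
    {p : Fin (2^h-1) × Fin (2^h-1) |
      (btree h).Adj p.1 p.2 ∧ rk1 h (p.1 : ℕ) ≤ k ∧ ¬ (rk1 h (p.2 : ℕ) ≤ k)}.ncard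
      ≤ h - 1 := by
  have hle := Set.ncard_le_ncard_of_injOn
    (s := {p : Fin (2^h-1) × Fin (2^h-1) |
      (btree h).Adj p.1 p.2 ∧ rk1 h (p.1 : ℕ) ≤ k ∧ ¬ (rk1 h (p.2 : ℕ) ≤ k)})
    (t := Set.Iio (h-1))
    (fun q => min (dep (q.1 : ℕ)) (dep (q.2 : ℕ)))
    ?_ ?_ (Set.finite_Iio _)
  · have : (Set.Iio (h-1)).ncard = h - 1 := by
      rw [Set.ncard_eq_toFinset_card']; simp
    omega
  · intro q hq
    obtain ⟨hadj, hin, hout⟩ := hq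
    obtain ⟨p, _, hdh, hmin, _, _, _⟩ := cross_struct hadj hin (by omega)
    simp only [Set.mem_Iio]
    omega
  · intro q1 hq1 q2 hq2 hfe
    obtain ⟨hadj1, hin1, hout1⟩ := hq1
    obtain ⟨hadj2, hin2, hout2⟩ := hq2
    obtain ⟨p1, hp1, hdh1, hmin1, wa1, wb1, hc1⟩ := cross_struct hadj1 hin1 (by omega)
    obtain ⟨p2, hp2, hdh2, hmin2, wa2, wb2, hc2⟩ := cross_struct hadj2 hin2 (by omega)
    simp only at hfe
    have hdeq : dep p2 = dep p1 := by rw [← hmin1, ← hmin2, hfe]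
    rw [hdeq] at wa2 wb2
    have hpe : p1 = p2 := parent_unique hp1 hp2 hdeq hdh1 wa1 wb1 wa2 wb2
    subst hpe
    rcases hc1 with ⟨hx1, hy1⟩ | ⟨hx1, hy1⟩ <;> rcases hc2 with ⟨hx2, hy2⟩ | ⟨hx2, hy2⟩
    · exact Prod.ext (Fin.ext (by omega)) (Fin.ext (by omega))
    · -- q1.2 = p, q2.1 = p : rk1 p ≤ k and k+1 ≤ rk1 p
      exfalso; rw [hy1] at hout1; rw [hx2] at hin2; omega
    · exfalso; rw [hy2] at hout2; rw [hx1] at hin1; omega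
    · exact Prod.ext (Fin.ext (by omega)) (Fin.ext (by omega))

/-- the in-order ranking map, as a function on `Fin (2^h-1)` (0-based rank) -/
def rkF (h : ℕ) : Fin (2^h - 1) → Fin (2^h - 1) := fun i =>
  ⟨rk1 h (i : ℕ) - 1, by
    have h2 : 1 ≤ 2^h := Nat.one_le_two_pow
    have hi : (i : ℕ) + 1 < 2^h := by have := i.isLt; omega
    have hle := rk1_le hi
    have hpos := rk1_pos h (i : ℕ)
    omega⟩

lemma rkF_inj (h : ℕ) : Function.Injective (rkF h) := by
  intro i j hij
  have h2 : 1 ≤ 2^h := Nat.one_le_two_pow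
  have hi : (i : ℕ) + 1 < 2^h := by have := i.isLt; omega
  have hj : (j : ℕ) + 1 < 2^h := by have := j.isLt; omega
  have hpi := rk1_pos h (i : ℕ)
  have hpj := rk1_pos h (j : ℕ)
  have hval : rk1 h (i : ℕ) - 1 = rk1 h (j : ℕ) - 1 := congrArg Fin.val hij
  exact Fin.ext (rk1_inj hi hj (by omega))

noncomputable def rkE (h : ℕ) : Fin (2^h - 1) ≃ Fin (2^h - 1) :=
  Equiv.ofBijective _ ((Finite.injective_iff_bijective).mp (rkF_inj h))

end CWAux

open CWAux in
/-- The cutwidth of the complete binary tree on `N = 2^h - 1` nodes is at most `h - 1`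
(in particular at most `log₂ N`). -/
theorem stmt5 (h : ℕ) (hh : 1 ≤ h) : cutwidth (btree h) ≤ h - 1 := by
  have hcard : Fintype.card (Fin (2^h - 1)) = 2^h - 1 := Fintype.card_fin _
  have h2 : 1 ≤ 2^h := Nat.one_le_two_pow
  set σ : Fin (Fintype.card (Fin (2^h - 1))) ≃ Fin (2^h - 1) :=
    (finCongr hcard).trans (rkE h).symm with hσ
  have hmem : ∀ (k : ℕ) (v : Fin (2^h - 1)),
      (∃ j : Fin (Fintype.card (Fin (2^h - 1))), (j : ℕ) < k ∧ σ j = v)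
        ↔ rk1 h (v : ℕ) ≤ k := by
    intro k v
    have hv : (v : ℕ) + 1 < 2^h := by have := v.isLt; omega
    have hpos := rk1_pos h (v : ℕ)
    have hle := rk1_le (h := h) hv
    have key : ∀ j : Fin (Fintype.card (Fin (2^h - 1))),
        σ j = v ↔ rk1 h (v : ℕ) - 1 = (j : ℕ) := by
      intro j
      rw [hσ, Equiv.trans_apply, Equiv.symm_apply_eq, Fin.ext_iff]
      rw [rkE, Equiv.ofBijective_apply]
      simp [rkF]
      omega
    constructor
    · rintro ⟨j, hj, hje⟩
      rw [key j] at hje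
      omega
    · intro hrk
      have h2h : 2 ≤ 2^h := by
        calc 2 = 2^1 := (pow_one 2).symm
        _ ≤ 2^h := Nat.pow_le_pow_right (by norm_num) hh
      refine ⟨⟨rk1 h (v : ℕ) - 1, by rw [hcard]; omega⟩, by simp; omega, ?_⟩
      rw [key]
  rw [cutwidth]
  apply Nat.sInf_le
  refine Set.mem_setOf_eq ▸ ⟨σ, fun k => ?_⟩
  rw [cutOf]
  have hset : {p : Fin (2^h-1) × Fin (2^h-1) |
      (btree h).Adj p.1 p.2 ∧
        p.1 ∈ {v | ∃ j : Fin (Fintype.card (Fin (2^h - 1))), (j : ℕ) < k ∧ σ j = v} ∧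
        p.2 ∉ {v | ∃ j : Fin (Fintype.card (Fin (2^h - 1))), (j : ℕ) < k ∧ σ j = v}}
      = {p : Fin (2^h-1) × Fin (2^h-1) |
          (btree h).Adj p.1 p.2 ∧ rk1 h (p.1 : ℕ) ≤ k ∧ ¬ (rk1 h (p.2 : ℕ) ≤ k)} := by
    ext p
    simp only [Set.mem_setOf_eq]
    rw [hmem k p.1, hmem k p.2]
  rw [hset]
  exact cut_bound h k
end

section
/- Let T be a complete binary tree on N nodes, and let r ≥ 2. If S is a set of N/(2r^4) vertices of T whose cut (number of edges between S and its complement) is at most r^4, then S contains a vertex at distance at most 9·log₂(r) from the root. -/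
lemma log2_div_pow (n k : ℕ) : Nat.log 2 (n / 2^k) = Nat.log 2 n - k := by
  induction k with
  | zero => simp
  | succ k ih =>
    rw [pow_succ, ← Nat.div_div_eq_div_mul, Nat.log_div_base, ih]
    omega

def ancN (i e : ℕ) : ℕ := (i+1) / 2^(Nat.log 2 (i+1) - e) - 1

lemma ancN_add_one (i e : ℕ) : ancN i e + 1 = (i+1) / 2^(Nat.log 2 (i+1) - e) := by
  have h1 : 2^(Nat.log 2 (i+1) - e) ≤ i+1 :=
    le_trans (Nat.pow_le_pow_right (by norm_num) (Nat.sub_le _ _))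
      (Nat.pow_log_le_self 2 (Nat.succ_ne_zero i))
  have h2 : 1 ≤ (i+1) / 2^(Nat.log 2 (i+1) - e) :=
    (Nat.one_le_div_iff (Nat.pow_pos (by norm_num))).mpr h1
  unfold ancN
  omega

lemma ancN_log (i e : ℕ) (he : e ≤ Nat.log 2 (i+1)) :
    Nat.log 2 (ancN i e + 1) = e := by
  rw [ancN_add_one, log2_div_pow]; omega

lemma ancN_self (i : ℕ) : ancN i (Nat.log 2 (i+1)) = i := by
  unfold ancN; simp

lemma ancN_le (i e : ℕ) : ancN i e ≤ i := by
  have := Nat.div_le_self (i+1) (2^(Nat.log 2 (i+1) - e))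
  unfold ancN; omega

lemma ancN_comp (i d e : ℕ) (hd : d ≤ e) (he : e ≤ Nat.log 2 (i+1)) :
    ancN (ancN i e) d = ancN i d := by
  have h1 := ancN_add_one i e
  have h2 : ancN (ancN i e) d + 1 = ancN i d + 1 := by
    rw [ancN_add_one (ancN i e) d, ancN_log i e he, ancN_add_one i e, ancN_add_one i d,
      Nat.div_div_eq_div_mul, ← pow_add]
    congr 2
    omega
  omega

lemma ancN_parent (i e : ℕ) (h1 : 1 ≤ e) (he : e ≤ Nat.log 2 (i+1)) :
    ancN i (e-1) + 1 = (ancN i e + 1) / 2 := by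
  rw [ancN_add_one, ancN_add_one, Nat.div_div_eq_div_mul, ← pow_succ]
  congr 2
  omega

lemma ancN_bounds (i e : ℕ) :
    2^(Nat.log 2 (i+1) - e) * (ancN i e + 1) ≤ i+1 ∧
    i+1 < 2^(Nat.log 2 (i+1) - e) * (ancN i e + 2) := by
  have hp : 0 < 2^(Nat.log 2 (i+1) - e) := Nat.pow_pos (by norm_num)
  have h3 := ancN_add_one i e
  constructor
  · rw [h3, mul_comm]
    exact Nat.div_mul_le_self _ _
  · have h4 : (i+1) / 2^(Nat.log 2 (i+1) - e) < ancN i e + 2 := by omega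
    rw [Nat.div_lt_iff_lt_mul hp] at h4
    rw [mul_comm]
    exact h4

/-- If `S` is a set of `N/(2r^4)` vertices of the complete binary tree on `N = 2^h - 1`
nodes whose cut is at most `r^4`, then `S` contains a vertex at distance at most
`9·log₂ r` from the root. -/
theorem stmt6 (h r : ℕ) (hr : 2 ≤ r)
    (hh : 9 * Real.logb 2 r + 1 ≤ h) (hbig : 2 * r^9 ≤ 2^h - 1)
    (S : Set (Fin (2^h - 1)))
    (hcard : S.ncard = (2^h - 1) / (2 * r^4))
    (hcut : cutOf (btree h) S ≤ r^4) :
    ∃ v ∈ S, (Nat.log 2 ((v : ℕ) + 1) : ℝ) ≤ 9 * Real.logb 2 r := by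
  classical
  by_contra hcon
  push_neg at hcon
  have hr0 : (0:ℝ) < r := by positivity
  have hr1 : (1:ℝ) ≤ r := by exact_mod_cast le_trans one_le_two (by exact_mod_cast hr)
  have hL0 : (0:ℝ) ≤ 9 * Real.logb 2 r := by
    have : (0:ℝ) ≤ Real.logb 2 r := Real.logb_nonneg one_lt_two hr1
    linarith
  set d : ℕ := ⌊9 * Real.logb 2 r⌋₊ + 1 with hdDef
  have hdepth : ∀ v ∈ S, d ≤ Nat.log 2 ((v:ℕ)+1) := by
    intro v hv
    have h1 := hcon v hv
    have h2 : (⌊9 * Real.logb 2 r⌋₊ : ℝ) < (Nat.log 2 ((v:ℕ)+1) : ℕ) :=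
      lt_of_le_of_lt (Nat.floor_le hL0) h1
    have h3 : ⌊9 * Real.logb 2 r⌋₊ < Nat.log 2 ((v:ℕ)+1) := by exact_mod_cast h2
    omega
  have hd1 : 1 ≤ d := by omega
  have hdh : d ≤ h := by
    have h2 : (⌊9 * Real.logb 2 r⌋₊ : ℝ) ≤ 9 * Real.logb 2 r := Nat.floor_le hL0
    have h3 : (d:ℝ) ≤ h := by
      rw [hdDef]
      push_cast
      linarith
    exact_mod_cast h3
  have hpow : r^9 + 1 ≤ 2^d := by
    have hLd : 9 * Real.logb 2 r < (d:ℝ) := by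
      rw [hdDef]; push_cast; exact Nat.lt_floor_add_one _
    have h1 : (r:ℝ)^9 < (2:ℝ)^(d:ℕ) := by
      have e1 : (r:ℝ)^(9:ℕ) = (2:ℝ) ^ (9 * Real.logb 2 r) := by
        rw [mul_comm, Real.rpow_mul (by norm_num), Real.rpow_logb (by norm_num) (by norm_num) hr0,
          show ((9:ℝ)) = ((9:ℕ):ℝ) from by norm_num, Real.rpow_natCast]
      have e2 : ((2:ℝ)^(d:ℕ) : ℝ) = (2:ℝ) ^ ((d:ℕ):ℝ) := (Real.rpow_natCast 2 d).symm
      rw [e1, e2]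
      exact Real.rpow_lt_rpow_left_iff one_lt_two |>.mpr hLd
    have : r^9 < 2^d := by exact_mod_cast h1
    omega
  -- finset version of S
  have hS : S.Finite := Set.toFinite S
  set S' : Finset (Fin (2^h-1)) := hS.toFinset with hS'def
  have hcard' : S'.card = (2^h-1) / (2*r^4) := by
    rw [← hcard, hS'def]
    exact (Set.ncard_eq_toFinset_card S hS).symm
  set f : Fin (2^h-1) → ℕ := fun v => ancN (v:ℕ) d with hfdef
  set I : Finset ℕ := S'.image f with hIdef
  -- every vertex has depth ≤ h - 1
  have hdepth_le : ∀ v : Fin (2^h-1), Nat.log 2 ((v:ℕ)+1) ≤ h - 1 := by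
    intro v
    have hv := v.isLt
    have h1 : (v:ℕ)+1 < 2^h := by
      have : 1 ≤ 2^h := Nat.one_le_two_pow
      omega
    have h2 : Nat.log 2 ((v:ℕ)+1) < h := Nat.log_lt_of_lt_pow (Nat.succ_ne_zero _) h1
    omega
  -- step 1
  have step1 : S'.card ≤ (2^(h-d) - 1) * I.card := by
    apply Finset.card_le_mul_card_image
    intro t ht
    refine le_trans (Finset.card_le_card_of_injOn
      (t := Finset.range (2^(h-d) - 1))
      (fun v : Fin (2^h-1) => (v:ℕ) - t * 2^(Nat.log 2 ((v:ℕ)+1) - d)) ?_ ?_)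
      (le_of_eq (Finset.card_range _))
    · intro v hv
      simp only [Finset.mem_coe, Finset.mem_filter] at hv
      obtain ⟨hvS', hvt⟩ := hv
      have hvS : v ∈ S := hS.mem_toFinset.mp hvS'
      have hdv : d ≤ Nat.log 2 ((v:ℕ)+1) := hdepth v hvS
      have hb := ancN_bounds (v:ℕ) d
      have hvt2 : ancN ((v:ℕ)) d = t := hvt
      rw [hvt2] at hb
      have hk1 : 2^(Nat.log 2 ((v:ℕ)+1) - d + 1) = 2^(Nat.log 2 ((v:ℕ)+1) - d) * 2 := pow_succ 2 _
      have hk2 : 2^(Nat.log 2 ((v:ℕ)+1) - d + 1) ≤ 2^(h-d) := by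
        apply Nat.pow_le_pow_right (by norm_num)
        have := hdepth_le v
        omega
      have hk3 : 1 ≤ 2^(Nat.log 2 ((v:ℕ)+1) - d) := Nat.one_le_two_pow
      have hda : (2:ℕ)^(Nat.log 2 ((v:ℕ)+1) - d) * (t+1)
          = t*2^(Nat.log 2 ((v:ℕ)+1) - d) + 2^(Nat.log 2 ((v:ℕ)+1) - d) := by ring
      have hdb : (2:ℕ)^(Nat.log 2 ((v:ℕ)+1) - d) * (t+2)
          = t*2^(Nat.log 2 ((v:ℕ)+1) - d) + 2^(Nat.log 2 ((v:ℕ)+1) - d)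
            + 2^(Nat.log 2 ((v:ℕ)+1) - d) := by ring
      show (v:ℕ) - t * 2^(Nat.log 2 ((v:ℕ)+1) - d) ∈ Finset.range (2^(h-d) - 1)
      rw [Finset.mem_range]
      omega
    · intro v₁ hv₁ v₂ hv₂ heq
      simp only [Finset.coe_filter, Set.mem_setOf_eq] at hv₁ hv₂
      obtain ⟨hv₁S', hv₁t⟩ := hv₁
      obtain ⟨hv₂S', hv₂t⟩ := hv₂
      have hd₁ : d ≤ Nat.log 2 ((v₁:ℕ)+1) := hdepth v₁ (hS.mem_toFinset.mp hv₁S')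
      have hd₂ : d ≤ Nat.log 2 ((v₂:ℕ)+1) := hdepth v₂ (hS.mem_toFinset.mp hv₂S')
      have hb₁ := ancN_bounds (v₁:ℕ) d
      have hb₂ := ancN_bounds (v₂:ℕ) d
      have hv₁t2 : ancN ((v₁:ℕ)) d = t := hv₁t
      have hv₂t2 : ancN ((v₂:ℕ)) d = t := hv₂t
      rw [hv₁t2] at hb₁
      rw [hv₂t2] at hb₂
      obtain ⟨k₁, hk₁⟩ : ∃ k, Nat.log 2 ((v₁:ℕ)+1) - d = k := ⟨_, rfl⟩
      obtain ⟨k₂, hk₂⟩ : ∃ k, Nat.log 2 ((v₂:ℕ)+1) - d = k := ⟨_, rfl⟩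
      rw [hk₁] at hb₁
      rw [hk₂] at hb₂
      have heq' : (v₁:ℕ) - t * 2^k₁ = (v₂:ℕ) - t * 2^k₂ := by
        have h0 : (v₁:ℕ) - t * 2^(Nat.log 2 ((v₁:ℕ)+1) - d)
            = (v₂:ℕ) - t * 2^(Nat.log 2 ((v₂:ℕ)+1) - d) := heq
        rw [hk₁, hk₂] at h0
        exact h0
      have hp₁ : 1 ≤ (2:ℕ)^k₁ := Nat.one_le_two_pow
      have hp₂ : 1 ≤ (2:ℕ)^k₂ := Nat.one_le_two_pow
      have hda₁ : (2:ℕ)^k₁ * (t+1) = t*2^k₁ + 2^k₁ := by ring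
      have hdb₁ : (2:ℕ)^k₁ * (t+2) = t*2^k₁ + 2^k₁ + 2^k₁ := by ring
      have hda₂ : (2:ℕ)^k₂ * (t+1) = t*2^k₂ + 2^k₂ := by ring
      have hdb₂ : (2:ℕ)^k₂ * (t+2) = t*2^k₂ + 2^k₂ + 2^k₂ := by ring
      have hs₁ : (2:ℕ)^(k₁+1) = 2^k₁ + 2^k₁ := by rw [pow_succ]; ring
      have hs₂ : (2:ℕ)^(k₂+1) = 2^k₂ + 2^k₂ := by rw [pow_succ]; ring
      have hlog₁ : Nat.log 2 ((v₁:ℕ) - t * 2^k₁ + 1) = k₁ :=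
        Nat.log_eq_of_pow_le_of_lt_pow (by omega) (by omega)
      have hlog₂ : Nat.log 2 ((v₁:ℕ) - t * 2^k₁ + 1) = k₂ := by
        rw [heq']
        exact Nat.log_eq_of_pow_le_of_lt_pow (by omega) (by omega)
      have hkk : k₁ = k₂ := by rw [← hlog₁, hlog₂]
      have hte : t * 2^k₁ = t * 2^k₂ := by rw [hkk]
      apply Fin.ext
      omega
  -- step 2 : build cut pairs
  have hpair : ∀ t ∈ I, ∃ p : Fin (2^h-1) × Fin (2^h-1),
      ((btree h).Adj p.1 p.2 ∧ p.1 ∈ S ∧ p.2 ∉ S) ∧ ancN ((p.1:ℕ)) d = t := by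
    intro t ht
    obtain ⟨v, hvS', hvt⟩ := Finset.mem_image.mp ht
    have hvS : v ∈ S := hS.mem_toFinset.mp hvS'
    have hdv : d ≤ Nat.log 2 ((v:ℕ)+1) := hdepth v hvS
    have hFlt : ∀ e, ancN (v:ℕ) e < 2^h - 1 := fun e => lt_of_le_of_lt (ancN_le _ _) v.isLt
    set F : ℕ → Fin (2^h-1) := fun e => ⟨ancN (v:ℕ) e, hFlt e⟩ with hFdef
    have hex : ∃ e, e ≤ Nat.log 2 ((v:ℕ)+1) ∧ F e ∈ S := by
      refine ⟨Nat.log 2 ((v:ℕ)+1), le_refl _, ?_⟩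
      have : F (Nat.log 2 ((v:ℕ)+1)) = v := Fin.ext (by simp [hFdef, ancN_self])
      rwa [this]
    set e₀ := Nat.find hex with he₀def
    obtain ⟨he₀D, he₀S⟩ := Nat.find_spec hex
    have hde₀ : d ≤ e₀ := by
      have h1 := hdepth (F e₀) he₀S
      have h2 : ((F e₀ : Fin (2^h-1)) : ℕ) = ancN (v:ℕ) e₀ := rfl
      rw [h2, ancN_log _ _ he₀D] at h1
      exact h1
    have h1e₀ : 1 ≤ e₀ := le_trans hd1 hde₀
    have hnotS : F (e₀ - 1) ∉ S := by
      intro hmem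
      exact Nat.find_min hex (show e₀ - 1 < e₀ by omega) ⟨by omega, hmem⟩
    have hpar := ancN_parent (v:ℕ) e₀ h1e₀ he₀D
    have ha1 : 1 ≤ ancN (v:ℕ) e₀ := by
      have hl := ancN_log (v:ℕ) e₀ he₀D
      by_contra hc
      push_neg at hc
      have hz : ancN (v:ℕ) e₀ = 0 := by omega
      rw [hz] at hl
      simp at hl
      omega
    have hq := Nat.div_add_mod (ancN (v:ℕ) e₀ + 1) 2
    have hm : (ancN (v:ℕ) e₀ + 1) % 2 < 2 := Nat.mod_lt _ (by norm_num)
    have hrel : ancN (v:ℕ) e₀ = 2*(ancN (v:ℕ) (e₀-1)) + 1 ∨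
        ancN (v:ℕ) e₀ = 2*(ancN (v:ℕ) (e₀-1)) + 2 := by omega
    have hadj : (btree h).Adj (F e₀) (F (e₀-1)) := by
      rw [btree, SimpleGraph.fromRel_adj]
      constructor
      · intro hcontra
        have : ancN (v:ℕ) e₀ = ancN (v:ℕ) (e₀-1) := congrArg Fin.val hcontra
        omega
      · right
        exact hrel
    refine ⟨(F e₀, F (e₀-1)), ⟨hadj, he₀S, hnotS⟩, ?_⟩
    have : ancN (ancN (v:ℕ) e₀) d = ancN (v:ℕ) d := ancN_comp (v:ℕ) d e₀ hde₀ he₀D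
    rw [← hvt, hfdef]
    exact this
  have hNpos : 0 < 2^h - 1 := lt_of_lt_of_le (by positivity) hbig
  haveI : Nonempty (Fin (2^h-1)) := ⟨⟨0, hNpos⟩⟩
  choose! p hp1 hp2 using hpair
  have step2 : I.card ≤ cutOf (btree h) S := by
    rw [← Set.ncard_coe_finset]
    unfold cutOf
    apply Set.ncard_le_ncard_of_injOn p
    · intro t ht
      rw [Finset.mem_coe] at ht
      exact hp1 t ht
    · intro t₁ h₁ t₂ h₂ heq
      rw [Finset.mem_coe] at h₁ h₂
      rw [← hp2 t₁ h₁, ← hp2 t₂ h₂, heq]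
  -- arithmetic contradiction
  have hIc : I.card ≤ r^4 := le_trans step2 hcut
  have hX : 1 ≤ 2^(h-d) := Nat.one_le_two_pow
  have h2h : 2^h = 2^d * 2^(h-d) := by
    rw [← pow_add]
    congr 1
    omega
  have key : 2*r^4*((2^(h-d)-1)*r^4 + 1) ≤ 2^h - 1 := by
    obtain ⟨Y, hY⟩ : ∃ Y, 2^(h-d) = Y + 1 := ⟨2^(h-d)-1, by omega⟩
    have h2d : 2^h = 2^d * (Y+1) := by rw [h2h, hY]
    have hone : 1 ≤ 2^h := Nat.one_le_two_pow
    rw [hY]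
    simp only [Nat.add_sub_cancel]
    have hmul : (r^9+1) * (Y+1) ≤ 2^d * (Y+1) := Nat.mul_le_mul_right _ hpow
    have ha : 2*r^8 ≤ r^9 := by
      calc 2*r^8 ≤ r * r^8 := Nat.mul_le_mul_right _ hr
        _ = r^9 := by ring
    have hb : 2*r^4 ≤ r^9 := by
      calc 2*r^4 ≤ r^5 * r^4 :=
            Nat.mul_le_mul_right _ (le_trans (show (2:ℕ) ≤ 2^5 by norm_num)
              (Nat.pow_le_pow_left hr 5))
        _ = r^9 := by ring
    have haY : 2*r^8*Y ≤ r^9*Y := Nat.mul_le_mul_right Y ha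
    have lhs_le : 2*r^4*(Y*r^4+1) + 1 ≤ (r^9+1)*(Y+1) := by nlinarith [haY, hb]
    have hfin : 2*r^4*(Y*r^4+1) + 1 ≤ 2^h :=
      le_trans lhs_le (le_trans hmul (le_of_eq h2d.symm))
    exact Nat.le_sub_one_of_lt hfin
  have hdiv : (2^(h-d)-1)*r^4 + 1 ≤ (2^h-1)/(2*r^4) := by
    rw [Nat.le_div_iff_mul_le (by positivity)]
    calc ((2^(h-d)-1)*r^4 + 1) * (2*r^4) = 2*r^4*((2^(h-d)-1)*r^4 + 1) := by ring
    _ ≤ 2^h - 1 := key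
  have final : S'.card ≤ (2^(h-d)-1) * r^4 :=
    le_trans step1 (Nat.mul_le_mul_left _ hIc)
  rw [hcard'] at final
  omega
end

section
/- Wald's identity corollary: let X_1, X_2, ... be i.i.d. real random variables with E[X] < 0, let γ(s) = log E[e^{sX}] be the log-MGF, and suppose there exists s* > 0 with γ(s*) = 0. Let S_n = X_1 + ... + X_n, fix ε > 0 and β < 0, and let J be the first n with S_n ≥ ε or S_n ≤ β. Then P(S_J ≥ ε) ≤ e^{-s*·ε}. -/
open MeasureTheory ProbabilityTheory

/-- Wald's identity corollary: for i.i.d. real random variables `X₁, X₂, ...` with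
`E[X] < 0` and a point `s* > 0` where the log-MGF vanishes (i.e. `E[e^{s*X}] = 1`),
letting `Sₙ = X₁ + ... + Xₙ` and `J` the first `n` with `Sₙ ≥ ε` or `Sₙ ≤ β`
(for fixed `ε > 0`, `β < 0`), we have `P(S_J ≥ ε) ≤ e^{-s*·ε}`. -/
theorem stmt9 {Ω : Type*} [MeasurableSpace Ω] (P : Measure Ω) [IsProbabilityMeasure P]
    (X : ℕ → Ω → ℝ) (hmeas : ∀ n, Measurable (X n))
    (hindep : iIndepFun X P)
    (hident : ∀ n, IdentDistrib (X n) (X 0) P P)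
    (hint : Integrable (X 0) P) (hneg : ∫ ω, X 0 ω ∂P < 0)
    (s : ℝ) (hs : 0 < s) (hmgf : ∫ ω, Real.exp (s * X 0 ω) ∂P = 1)
    (ε β : ℝ) (hε : 0 < ε) (hβ : β < 0)
    (S : ℕ → Ω → ℝ) (hS : ∀ n ω, S n ω = ∑ i ∈ Finset.range n, X i ω)
    (J : Ω → ℕ) (hJ : ∀ ω, J ω = sInf {n | ε ≤ S n ω ∨ S n ω ≤ β}) :
    (P {ω | ε ≤ S (J ω) ω}).toReal ≤ Real.exp (-(s * ε)) := by
  classical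
  -- basic measurability
  have hSm : ∀ n, Measurable (S n) := by
    intro n
    have h : S n = fun ω => ∑ i ∈ Finset.range n, X i ω := funext (hS n)
    rw [h]
    exact Finset.measurable_sum _ fun i _ => hmeas i
  have hS0 : ∀ ω, S 0 ω = 0 := by intro ω; simp [hS 0 ω]
  have hSsucc : ∀ n ω, S (n + 1) ω = S n ω + X n ω := by
    intro n ω; rw [hS (n+1) ω, Finset.sum_range_succ, ← hS n ω]
  -- the "continue" sets
  set T : ℕ → Set Ω := fun n => {ω | ∀ k ≤ n, β < S k ω ∧ S k ω < ε} with hT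
  have hTm : ∀ n, MeasurableSet (T n) := by
    intro n
    have : T n = ⋂ k, ⋂ (_ : k ≤ n), {ω | β < S k ω} ∩ {ω | S k ω < ε} := by
      ext ω; simp [hT, Set.mem_iInter, forall_and]
    rw [this]
    exact MeasurableSet.iInter fun k => MeasurableSet.iInter fun _ =>
      (measurableSet_lt measurable_const (hSm k)).inter (measurableSet_lt (hSm k) measurable_const)
  have hnotC : ∀ k ω, (¬ (ε ≤ S k ω ∨ S k ω ≤ β)) ↔ (β < S k ω ∧ S k ω < ε) := by
    intro k ω; push_neg; tauto
  -- characterization of J = n+1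
  have hJchar : ∀ n ω, J ω = n + 1 ↔ ((ε ≤ S (n+1) ω ∨ S (n+1) ω ≤ β) ∧ ω ∈ T n) := by
    intro n ω
    rw [hJ ω]
    constructor
    · intro h
      have hne : {m | ε ≤ S m ω ∨ S m ω ≤ β}.Nonempty := by
        by_contra hne
        rw [Set.not_nonempty_iff_eq_empty] at hne
        rw [hne, Nat.sInf_empty] at h
        omega
      have hmem := Nat.sInf_mem hne
      rw [h] at hmem
      refine ⟨hmem, fun k hk => ?_⟩
      rw [← hnotC]
      exact Nat.notMem_of_lt_sInf (by omega : k < sInf {m | ε ≤ S m ω ∨ S m ω ≤ β})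
    · rintro ⟨hC, hT'⟩
      have h1 : sInf {m | ε ≤ S m ω ∨ S m ω ≤ β} ≤ n + 1 := Nat.sInf_le hC
      have h2 : ¬ sInf {m | ε ≤ S m ω ∨ S m ω ≤ β} ≤ n := by
        intro hle
        have hmem := Nat.sInf_mem (⟨n+1, hC⟩ : {m | ε ≤ S m ω ∨ S m ω ≤ β}.Nonempty)
        have := hT' _ hle
        rw [← hnotC] at this
        exact this hmem
      omega
  -- exponential moments
  have hexpm : Measurable fun x : ℝ => Real.exp (s * x) :=
    Real.measurable_exp.comp (measurable_const.mul measurable_id)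
  have hint0 : Integrable (fun ω => Real.exp (s * X 0 ω)) P := by
    by_contra h
    rw [integral_undef h] at hmgf
    norm_num at hmgf
  have hidentExp : ∀ n, IdentDistrib (fun ω => Real.exp (s * X n ω))
      (fun ω => Real.exp (s * X 0 ω)) P P := fun n => (hident n).comp hexpm
  have hintn : ∀ n, Integrable (fun ω => Real.exp (s * X n ω)) P :=
    fun n => (hidentExp n).integrable_iff.mpr hint0
  have hmgfn : ∀ n, ∫ ω, Real.exp (s * X n ω) ∂P = 1 :=
    fun n => (hidentExp n).integral_eq.trans hmgf
  -- partial sums as functions on finite products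
  have hsig : ∀ n : ℕ, ∃ sig : ℕ → (((Finset.range n : Finset ℕ)) → ℝ) → ℝ,
      (∀ k, Measurable (sig k)) ∧ (∀ k ω, k ≤ n → sig k (fun i => X i ω) = S k ω) := by
    intro n
    refine ⟨fun k v => ∑ i ∈ Finset.range k,
        (if h : i ∈ Finset.range n then v ⟨i, h⟩ else 0), ?_, ?_⟩
    · intro k
      apply Finset.measurable_sum
      intro i _
      by_cases h : i ∈ Finset.range n
      · simp only [dif_pos h]; exact measurable_pi_apply _
      · simp only [dif_neg h]; exact measurable_const
    · intro k ω hk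
      rw [hS k ω]
      refine Finset.sum_congr rfl fun i hi => ?_
      have hin : i ∈ Finset.range n := by
        rw [Finset.mem_range] at *; omega
      rw [dif_pos hin]
  -- independence helper
  have hIndep : ∀ (n : ℕ) (F : Ω → ℝ) (φ : (((Finset.range n : Finset ℕ)) → ℝ) → ℝ),
      Measurable φ → (∀ ω, F ω = φ (fun i => X i ω)) →
      IndepFun F (fun ω => Real.exp (s * X n ω)) P := by
    intro n F φ hφ hFφ
    have hdisj : Disjoint (Finset.range n) ({n} : Finset ℕ) := by simp
    have base := hindep.indepFun_finset (Finset.range n) {n} hdisj hmeas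
    have hψ : Measurable fun w : (({n} : Finset ℕ)) → ℝ =>
        Real.exp (s * w ⟨n, Finset.mem_singleton_self n⟩) :=
      hexpm.comp (measurable_pi_apply _)
    have hcomp := base.comp hφ hψ
    have hF : F = fun ω => φ (fun i : (Finset.range n : Finset ℕ) => X i ω) := funext hFφ
    rw [hF]
    exact hcomp
  -- integrability of exp (s * S n)
  have IexpS : ∀ n, Integrable (fun ω => Real.exp (s * S n ω)) P := by
    intro n
    induction n with
    | zero => simpa [hS0] using (integrable_const (1:ℝ) : Integrable (fun _ : Ω => (1:ℝ)) P)
    | succ n ih =>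
      obtain ⟨sig, hsigm, hsigeq⟩ := hsig n
      have hind := hIndep n (fun ω => Real.exp (s * S n ω)) (fun v => Real.exp (s * sig n v))
        (hexpm.comp (hsigm n)) (fun ω => by simp only [hsigeq n ω le_rfl])
      have heq : (fun ω => Real.exp (s * S (n+1) ω))
          = (fun ω => Real.exp (s * S n ω)) * (fun ω => Real.exp (s * X n ω)) := by
        funext ω
        simp only [Pi.mul_apply, hSsucc n ω, mul_add, Real.exp_add]
      rw [heq]
      exact hind.integrable_mul ih (hintn n)
  -- the key quantities
  set A : ℕ → Set Ω := fun n => T n ∩ {ω | ε ≤ S (n+1) ω ∨ S (n+1) ω ≤ β} with hAdef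
  have hAm : ∀ n, MeasurableSet (A n) := by
    intro n
    refine (hTm n).inter ?_
    have : {ω | ε ≤ S (n+1) ω ∨ S (n+1) ω ≤ β}
        = {ω | ε ≤ S (n+1) ω} ∪ {ω | S (n+1) ω ≤ β} := Set.setOf_or
    rw [this]
    exact (measurableSet_le measurable_const (hSm (n+1))).union
      (measurableSet_le (hSm (n+1)) measurable_const)
  set B : ℕ → ℝ := fun n => ∫ ω, Set.indicator (T n) (fun ω => Real.exp (s * S n ω)) ω ∂P with hBdef
  set Ek : ℕ → ℝ := fun n => ∫ ω, Set.indicator (A n) (fun ω => Real.exp (s * S (n+1) ω)) ω ∂P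
    with hEkdef
  -- base case
  have hT0 : T 0 = Set.univ := by
    ext ω
    simp only [hT, Set.mem_setOf_eq, Set.mem_univ, iff_true, Nat.le_zero]
    rintro k rfl
    rw [hS0]
    exact ⟨hβ, hε⟩
  have hB0 : B 0 = 1 := by
    simp [hBdef, hT0, hS0]
  -- inductive step
  have hstep : ∀ n, B n = Ek n + B (n+1) := by
    intro n
    obtain ⟨sig, hsigm, hsigeq⟩ := hsig n
    have hsetm : MeasurableSet {v : ((Finset.range n : Finset ℕ)) → ℝ |
        ∀ k ≤ n, β < sig k v ∧ sig k v < ε} := by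
      have heq2 : {v : ((Finset.range n : Finset ℕ)) → ℝ | ∀ k ≤ n, β < sig k v ∧ sig k v < ε}
          = ⋂ k, ⋂ (_ : k ≤ n), (sig k ⁻¹' Set.Ioo β ε) := by
        ext v; simp [Set.mem_iInter, Set.mem_Ioo]
      rw [heq2]
      exact MeasurableSet.iInter fun k => MeasurableSet.iInter fun _ =>
        (hsigm k) measurableSet_Ioo
    have hφm : Measurable fun v => Set.indicator
        {v : ((Finset.range n : Finset ℕ)) → ℝ | ∀ k ≤ n, β < sig k v ∧ sig k v < ε}
        (fun v => Real.exp (s * sig n v)) v :=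
      Measurable.indicator (hexpm.comp (hsigm n)) hsetm
    have hFeq : ∀ ω, Set.indicator (T n) (fun ω => Real.exp (s * S n ω)) ω
        = Set.indicator {v : ((Finset.range n : Finset ℕ)) → ℝ |
            ∀ k ≤ n, β < sig k v ∧ sig k v < ε}
          (fun v => Real.exp (s * sig n v)) (fun i : (Finset.range n : Finset ℕ) => X i ω) := by
      intro ω
      have hmemiff : ((fun i : (Finset.range n : Finset ℕ) => X i ω) ∈
          {v : ((Finset.range n : Finset ℕ)) → ℝ | ∀ k ≤ n, β < sig k v ∧ sig k v < ε})
          ↔ ω ∈ T n := by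
        simp only [hT, Set.mem_setOf_eq]
        constructor
        · intro h k hk
          have := h k hk
          rwa [hsigeq k ω hk] at this
        · intro h k hk
          rw [hsigeq k ω hk]
          exact h k hk
      by_cases hω : ω ∈ T n
      · rw [Set.indicator_of_mem hω, Set.indicator_of_mem (hmemiff.mpr hω), hsigeq n ω le_rfl]
      · rw [Set.indicator_of_notMem hω,
          Set.indicator_of_notMem (fun h => hω (hmemiff.mp h))]
    have hind := hIndep n _ _ hφm hFeq
    have hIntTn : Integrable (Set.indicator (T n) fun ω => Real.exp (s * S n ω)) P :=
      (IexpS n).indicator (hTm n)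
    have hmul : ∀ ω, Set.indicator (T n) (fun ω => Real.exp (s * S (n+1) ω)) ω
        = Set.indicator (T n) (fun ω => Real.exp (s * S n ω)) ω * Real.exp (s * X n ω) := by
      intro ω
      by_cases hω : ω ∈ T n
      · rw [Set.indicator_of_mem hω, Set.indicator_of_mem hω, hSsucc n ω, mul_add, Real.exp_add]
      · rw [Set.indicator_of_notMem hω, Set.indicator_of_notMem hω, zero_mul]
    have h1 : ∫ ω, Set.indicator (T n) (fun ω => Real.exp (s * S (n+1) ω)) ω ∂P = B n := by
      calc ∫ ω, Set.indicator (T n) (fun ω => Real.exp (s * S (n+1) ω)) ω ∂P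
          = ∫ ω, ((Set.indicator (T n) fun ω => Real.exp (s * S n ω))
              * fun ω => Real.exp (s * X n ω)) ω ∂P := by
            refine integral_congr_ae (Filter.Eventually.of_forall fun ω => ?_)
            simp only [Pi.mul_apply]
            exact hmul ω
        _ = (∫ ω, Set.indicator (T n) (fun ω => Real.exp (s * S n ω)) ω ∂P)
            * ∫ ω, Real.exp (s * X n ω) ∂P :=
              hind.integral_mul_eq_mul_integral hIntTn.aestronglyMeasurable (hintn n).aestronglyMeasurable
        _ = B n := by rw [hmgfn n, mul_one]
    have hsplit : ∀ ω, Set.indicator (T n) (fun ω => Real.exp (s * S (n+1) ω)) ω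
        = Set.indicator (A n) (fun ω => Real.exp (s * S (n+1) ω)) ω
          + Set.indicator (T (n+1)) (fun ω => Real.exp (s * S (n+1) ω)) ω := by
      intro ω
      by_cases hω : ω ∈ T n
      · by_cases hc : ε ≤ S (n+1) ω ∨ S (n+1) ω ≤ β
        · have hA1 : ω ∈ A n := ⟨hω, hc⟩
          have hT1 : ω ∉ T (n+1) := by
            intro h
            have h2 := h (n+1) le_rfl
            rcases hc with hc | hc
            · exact absurd h2.2 (not_lt.mpr hc)
            · exact absurd h2.1 (not_lt.mpr hc)
          rw [Set.indicator_of_mem hω, Set.indicator_of_mem hA1,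
            Set.indicator_of_notMem hT1, add_zero]
        · have hT1 : ω ∈ T (n+1) := by
            intro k hk
            rcases Nat.lt_or_ge k (n+1) with h | h
            · exact hω k (by omega)
            · have hk1 : k = n + 1 := by omega
              subst hk1
              exact (hnotC (n+1) ω).mp hc
          have hA1 : ω ∉ A n := fun h => hc h.2
          rw [Set.indicator_of_mem hω, Set.indicator_of_mem hT1,
            Set.indicator_of_notMem hA1, zero_add]
      · have hT1 : ω ∉ T (n+1) := fun h => hω fun k hk => h k (by omega)
        have hA1 : ω ∉ A n := fun h => hω h.1
        rw [Set.indicator_of_notMem hω, Set.indicator_of_notMem hA1,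
          Set.indicator_of_notMem hT1, add_zero]
    have h2 : ∫ ω, Set.indicator (T n) (fun ω => Real.exp (s * S (n+1) ω)) ω ∂P
        = Ek n + B (n+1) := by
      calc ∫ ω, Set.indicator (T n) (fun ω => Real.exp (s * S (n+1) ω)) ω ∂P
          = ∫ ω, (Set.indicator (A n) (fun ω => Real.exp (s * S (n+1) ω)) ω
            + Set.indicator (T (n+1)) (fun ω => Real.exp (s * S (n+1) ω)) ω) ∂P :=
            integral_congr_ae (Filter.Eventually.of_forall hsplit)
        _ = Ek n + B (n+1) :=
            integral_add ((IexpS (n+1)).indicator (hAm n)) ((IexpS (n+1)).indicator (hTm (n+1)))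
    exact h1.symm.trans h2
  -- the telescoping identity
  have hmain : ∀ N, (∑ k ∈ Finset.range N, Ek k) + B N = 1 := by
    intro N
    induction N with
    | zero => simpa using hB0
    | succ n ih =>
      rw [Finset.sum_range_succ]
      have := hstep n
      linarith
  have hBnonneg : ∀ N, 0 ≤ B N := by
    intro N
    exact integral_nonneg fun ω => Set.indicator_nonneg (fun _ _ => (Real.exp_pos _).le) ω
  have hEksum : ∀ N, ∑ k ∈ Finset.range N, Ek k ≤ 1 := by
    intro N
    have := hmain N
    have := hBnonneg N
    linarith
  -- the "success" sets
  set G : ℕ → Set Ω := fun k => T k ∩ {ω | ε ≤ S (k+1) ω} with hGdef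
  have hGm : ∀ k, MeasurableSet (G k) :=
    fun k => (hTm k).inter (measurableSet_le measurable_const (hSm (k+1)))
  have hGsub : ∀ k, G k ⊆ A k := fun k ω h => ⟨h.1, Or.inl h.2⟩
  have hbound : ∀ k, Real.exp (s * ε) * (P (G k)).toReal ≤ Ek k := by
    intro k
    have hle1 : ∀ ω, Set.indicator (G k) (fun _ => Real.exp (s * ε)) ω
        ≤ Set.indicator (G k) (fun ω => Real.exp (s * S (k+1) ω)) ω := by
      intro ω
      by_cases hω : ω ∈ G k
      · rw [Set.indicator_of_mem hω, Set.indicator_of_mem hω]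
        exact Real.exp_le_exp.mpr (mul_le_mul_of_nonneg_left hω.2 hs.le)
      · rw [Set.indicator_of_notMem hω, Set.indicator_of_notMem hω]
    have hle2 : ∀ ω, Set.indicator (G k) (fun ω => Real.exp (s * S (k+1) ω)) ω
        ≤ Set.indicator (A k) (fun ω => Real.exp (s * S (k+1) ω)) ω := by
      intro ω
      by_cases hω : ω ∈ G k
      · rw [Set.indicator_of_mem hω, Set.indicator_of_mem (hGsub k hω)]
      · rw [Set.indicator_of_notMem hω]
        exact Set.indicator_nonneg (fun _ _ => (Real.exp_pos _).le) ω
    calc Real.exp (s * ε) * (P (G k)).toReal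
        = ∫ ω, Set.indicator (G k) (fun _ => Real.exp (s * ε)) ω ∂P := by
          rw [integral_indicator_const _ (hGm k), smul_eq_mul, mul_comm, measureReal_def]
      _ ≤ ∫ ω, Set.indicator (G k) (fun ω => Real.exp (s * S (k+1) ω)) ω ∂P :=
          integral_mono ((integrable_const _).indicator (hGm k))
            ((IexpS (k+1)).indicator (hGm k)) hle1
      _ ≤ Ek k :=
          integral_mono ((IexpS (k+1)).indicator (hGm k))
            ((IexpS (k+1)).indicator (hAm k)) hle2
  have hPsum : ∀ N, ∑ k ∈ Finset.range N, (P (G k)).toReal ≤ Real.exp (-(s * ε)) := by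
    intro N
    have h1 : Real.exp (s * ε) * ∑ k ∈ Finset.range N, (P (G k)).toReal ≤ 1 := by
      rw [Finset.mul_sum]
      exact le_trans (Finset.sum_le_sum fun k _ => hbound k) (hEksum N)
    have h2 : (0:ℝ) < Real.exp (s * ε) := Real.exp_pos _
    have h3 : ∑ k ∈ Finset.range N, (P (G k)).toReal ≤ 1 / Real.exp (s * ε) :=
      (le_div_iff₀ h2).mpr (by linarith [h1])
    simpa [Real.exp_neg, one_div] using h3
  -- decomposition of the target event
  have htarget : {ω | ε ≤ S (J ω) ω} = ⋃ k, G k := by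
    ext ω
    simp only [Set.mem_setOf_eq, Set.mem_iUnion]
    constructor
    · intro h
      have hne : J ω ≠ 0 := by
        intro h0
        rw [h0, hS0] at h
        linarith
      obtain ⟨m, hm⟩ := Nat.exists_eq_succ_of_ne_zero hne
      refine ⟨m, ((hJchar m ω).mp hm).2, ?_⟩
      rw [hm] at h
      exact h
    · rintro ⟨m, hTm', hmem⟩
      have hJm : J ω = m + 1 := (hJchar m ω).mpr ⟨Or.inl hmem, hTm'⟩
      rw [hJm]
      exact hmem
  have hdisjG : Pairwise (Function.onFun Disjoint fun k => G k) := by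
    intro i j hij
    simp only [Function.onFun]
    rw [Set.disjoint_left]
    intro ω hi hj
    have h1 : J ω = i + 1 := (hJchar i ω).mpr ⟨Or.inl hi.2, hi.1⟩
    have h2 : J ω = j + 1 := (hJchar j ω).mpr ⟨Or.inl hj.2, hj.1⟩
    omega
  rw [htarget, measure_iUnion hdisjG hGm]
  refine ENNReal.toReal_le_of_le_ofReal (Real.exp_nonneg _) ?_
  refine Summable.tsum_le_of_sum_le ENNReal.summable ?_
  intro F
  obtain ⟨N, hN⟩ : ∃ N, F ⊆ Finset.range N :=
    ⟨(F.sup id) + 1, fun x hx => Finset.mem_range.mpr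
      (Nat.lt_succ_of_le (Finset.le_sup (f := id) hx))⟩
  calc ∑ k ∈ F, P (G k) ≤ ∑ k ∈ Finset.range N, P (G k) :=
        Finset.sum_le_sum_of_subset hN
    _ ≤ ENNReal.ofReal (Real.exp (-(s * ε))) := by
        have hfin : ∀ k ∈ Finset.range N, P (G k) ≠ ⊤ := fun k _ => measure_ne_top P _
        rw [← ENNReal.ofReal_toReal (a := ∑ k ∈ Finset.range N, P (G k))
          (ENNReal.sum_ne_top.mpr hfin)]
        apply ENNReal.ofReal_le_ofReal
        rw [ENNReal.toReal_sum hfin]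
        exact hPsum N
end
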